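/- arXiv:1501.05106 — 2 statements merged into one kernel-verified Lean document; each statement's English description precedes it below -/
import Mathlib

section
/- Fix coprime positive integers p, q, and positive integers d, r, s with s ≥ r. Let u_1,…,u_{d+2r} be distinct points of the punctured unit disk. The product g(z) = ℓ_{u_1, s−r}(z) · ∏_{j=2}^{d+r} ℓ_{u_j}(z) · ∏_{j=d+r+1}^{d+2r} ℓ̄_{u_j}(z) is a strongly polar weighted homogeneous mixed polynomial with weight (p,q), polar degree dpq, and radial degree (d+2s)pq. -/
open Complex Finset

/-- `α_{u,k} = (1−r²)^{q(1/2+k)} / (r^{p(1+2k)} e^{iθ})` for `u = re^{iθ}`. -/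
noncomputable def alphauk (p q : ℕ) (u : ℂ) (k : ℕ) : ℂ :=
  (((1 - ‖u‖ ^ 2) ^ ((q : ℝ) * (1 / 2 + k)) : ℝ) : ℂ) /
    (((‖u‖ : ℝ) : ℂ) ^ (p * (1 + 2 * k)) *
      Complex.exp ((Complex.arg u : ℝ) * Complex.I))

/-- `ℓ_{u,k}(z) = z₁^{q(1+k)} z̄₁^{qk} − α_{u,k} z₂^{p(1+k)} z̄₂^{pk}`. -/
noncomputable def elluk (p q : ℕ) (u : ℂ) (k : ℕ) (z : ℂ × ℂ) : ℂ :=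
  z.1 ^ (q * (1 + k)) * (starRingEnd ℂ) z.1 ^ (q * k) -
    alphauk p q u k * (z.2 ^ (p * (1 + k)) * (starRingEnd ℂ) z.2 ^ (p * k))

/-- The conjugate polynomial `ℓ̄_u(z) = z̄₁^q − ᾱ_{u,0} z̄₂^p`. -/
noncomputable def ellbar (p q : ℕ) (u : ℂ) (z : ℂ × ℂ) : ℂ :=
  (starRingEnd ℂ) z.1 ^ q - (starRingEnd ℂ) (alphauk p q u 0) * (starRingEnd ℂ) z.2 ^ p

lemma elluk_scale (p q : ℕ) (u : ℂ) (k : ℕ) (R : ℝ) (η : ℂ) (hη : η ≠ 0)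
    (hc : (starRingEnd ℂ) η = η⁻¹) (z : ℂ × ℂ) :
    elluk p q u k ((R : ℂ) ^ p * η ^ p * z.1, (R : ℂ) ^ q * η ^ q * z.2) =
      (R : ℂ) ^ (p * q * (1 + 2 * k)) * η ^ (p * q) * elluk p q u k z := by
  simp only [elluk, mul_pow, map_mul, map_pow, Complex.conj_ofReal, hc, inv_pow]
  field_simp
  ring

lemma ellbar_scale (p q : ℕ) (u : ℂ) (R : ℝ) (η : ℂ) (hη : η ≠ 0)
    (hc : (starRingEnd ℂ) η = η⁻¹) (z : ℂ × ℂ) :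
    ellbar p q u ((R : ℂ) ^ p * η ^ p * z.1, (R : ℂ) ^ q * η ^ q * z.2) =
      (R : ℂ) ^ (p * q) * (η ^ (p * q))⁻¹ * ellbar p q u z := by
  simp only [ellbar, mul_pow, map_mul, map_pow, Complex.conj_ofReal, hc, inv_pow]
  field_simp
  ring

/-- The product `g = ℓ_{u₁,s−r} · ∏_{j=2}^{d+r} ℓ_{u_j} · ∏_{j=d+r+1}^{d+2r} ℓ̄_{u_j}`
is strongly polar weighted homogeneous of weight `(p,q)`, polar degree `dpq`
and radial degree `(d+2s)pq`, i.e. it satisfies the corresponding functional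
equation `g((R,η)∘z) = R^{(d+2s)pq} η^{dpq} g(z)`. -/
theorem stmt10 (p q : ℕ) (hp : 0 < p) (hq : 0 < q) (hpq : Nat.Coprime p q)
    (d r s : ℕ) (hd : 0 < d) (hr : 0 < r) (hs : r ≤ s)
    (u : ℕ → ℂ)
    (hu : ∀ j < d + 2 * r, 0 < ‖u j‖ ∧ ‖u j‖ < 1)
    (hdist : ∀ i < d + 2 * r, ∀ j < d + 2 * r, i ≠ j → u i ≠ u j) :
    ∀ (R : ℝ), 0 < R → ∀ η : ℂ, ‖η‖ = 1 → ∀ z : ℂ × ℂ,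
      (fun w : ℂ × ℂ =>
          elluk p q (u 0) (s - r) w *
            (∏ j ∈ Finset.Ico 1 (d + r), elluk p q (u j) 0 w) *
            ∏ j ∈ Finset.Ico (d + r) (d + 2 * r), ellbar p q (u j) w)
        ((R : ℂ) ^ p * η ^ p * z.1, (R : ℂ) ^ q * η ^ q * z.2) =
      (R : ℂ) ^ ((d + 2 * s) * p * q) * η ^ (d * p * q) *
        (fun w : ℂ × ℂ =>
          elluk p q (u 0) (s - r) w *
            (∏ j ∈ Finset.Ico 1 (d + r), elluk p q (u j) 0 w) *
            ∏ j ∈ Finset.Ico (d + r) (d + 2 * r), ellbar p q (u j) w) z := by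
  intro R hR η hη z
  have hη0 : η ≠ 0 := by
    intro h; rw [h] at hη; simp at hη
  have hc : (starRingEnd ℂ) η = η⁻¹ := (Complex.inv_eq_conj hη).symm
  simp only
  rw [elluk_scale p q (u 0) (s - r) R η hη0 hc z,
    Finset.prod_congr rfl (fun j _ => elluk_scale p q (u j) 0 R η hη0 hc z),
    Finset.prod_congr rfl (fun j _ => ellbar_scale p q (u j) R η hη0 hc z),
    Finset.prod_mul_distrib, Finset.prod_const,
    Finset.prod_mul_distrib, Finset.prod_const, Nat.card_Ico, Nat.card_Ico]
  obtain ⟨a, rfl⟩ := Nat.exists_eq_add_of_le hs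
  obtain ⟨e, rfl⟩ := Nat.exists_eq_add_of_lt hd
  have h1 : r + a - r = a := by omega
  have h2 : 0 + e + 1 + r - 1 = e + r := by omega
  have h3 : 0 + e + 1 + 2 * r - (0 + e + 1 + r) = r := by omega
  rw [h1, h2, h3]
  have hRn : (R : ℂ) ≠ 0 := by exact_mod_cast hR.ne'
  simp only [mul_pow, inv_pow]
  field_simp
  ring
end

section
/- Fix coprime positive integers p, q and d ≥ 1. The link of the holomorphic polynomial f(z) = z_1^{qd} − z_2^{pd} on S³, i.e. L = {z ∈ S³ : z_1^{qd} = z_2^{pd}}, is the disjoint union of exactly d regular orbits of the S¹-action ρ∘(z_1,z_2) = (ρ^p z_1, ρ^q z_2); namely L = ⋃_{j=0}^{d−1} K(u_j) where the u_j are the d distinct d-th roots determining z_2^p/z_1^q. -/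
open Complex

/-- The regular orbit `K(u)` for `u = r e^{iθ}`, `0 < r < 1`. -/
noncomputable def Korbit (p q : ℕ) (r θ : ℝ) : Set (ℂ × ℂ) :=
  {z | ∃ ρ : ℂ, ‖ρ‖ = 1 ∧
    z = (ρ ^ p * (Real.sqrt (1 - r ^ 2) : ℂ),
         ρ ^ q * (r : ℂ) * Complex.exp ((θ / p : ℝ) * Complex.I))}

/-- `K(u)` in terms of the punctured-disk coordinate `u`. -/
noncomputable def KorbitU (p q : ℕ) (u : ℂ) : Set (ℂ × ℂ) :=
  Korbit p q (‖u‖) (Complex.arg u)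

lemma exists_r (p q : ℕ) (hp : 0 < p) (hq : 0 < q) :
    ∃ r : ℝ, 0 < r ∧ r < 1 ∧ (1 - r^2)^q = r^(2*p) := by
  have hc : ContinuousOn (fun r : ℝ => (1 - r^2)^q - r^(2*p)) (Set.Icc 0 1) := by fun_prop
  have h := intermediate_value_Ioo' (by norm_num : (0:ℝ) ≤ 1) hc
  have h0 : (0:ℝ) ∈ Set.Ioo ((fun r : ℝ => (1 - r^2)^q - r^(2*p)) 1)
      ((fun r : ℝ => (1 - r^2)^q - r^(2*p)) 0) := by
    simp [zero_pow hq.ne', zero_pow (by positivity : 2*p ≠ 0), one_pow]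
  obtain ⟨r, hr, hr0⟩ := h h0
  refine ⟨r, hr.1, hr.2, ?_⟩
  have : (1 - r^2)^q - r^(2*p) = 0 := hr0
  linarith

lemma r_unique (p q : ℕ) (hp : 0 < p) (hq : 0 < q) {r s : ℝ}
    (hr0 : 0 < r) (hr1 : r < 1) (hs0 : 0 < s) (hs1 : s < 1)
    (hr : (1 - r^2)^q = r^(2*p)) (hs : (1 - s^2)^q = s^(2*p)) : r = s := by
  rcases lt_trichotomy r s with h | h | h
  · exfalso
    have h1 : r^(2*p) < s^(2*p) := pow_lt_pow_left₀ h hr0.le (by positivity)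
    have h2 : (1 - s^2)^q < (1 - r^2)^q := by
      apply pow_lt_pow_left₀ _ (by nlinarith) hq.ne'
      nlinarith
    nlinarith
  · exact h
  · exfalso
    have h1 : s^(2*p) < r^(2*p) := pow_lt_pow_left₀ h hs0.le (by positivity)
    have h2 : (1 - r^2)^q < (1 - s^2)^q := by
      apply pow_lt_pow_left₀ _ (by nlinarith) hq.ne'
      nlinarith
    nlinarith


lemma mem_Korbit_iff (p q : ℕ) (hp : 0 < p) (hq : 0 < q) (hpq : Nat.Coprime p q)
    (r θ : ℝ) (hr0 : 0 < r) (hr1 : r < 1) (z : ℂ × ℂ) :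
    z ∈ Korbit p q r θ ↔
      ‖z.1‖ = Real.sqrt (1 - r^2) ∧ ‖z.2‖ = r ∧
      z.2 ^ p * ((Real.sqrt (1 - r^2) : ℝ) : ℂ) ^ q
        = z.1 ^ q * (r:ℂ)^p * Complex.exp ((θ:ℝ) * I) := by
  set a : ℝ := Real.sqrt (1 - r^2) with ha_def
  have ha0 : 0 < a := Real.sqrt_pos.mpr (by nlinarith)
  have hexp_p : Complex.exp (((θ / p : ℝ) : ℂ) * I) ^ p = Complex.exp ((θ:ℝ) * I) := by
    rw [← Complex.exp_nat_mul]
    have hpC : (p:ℂ) ≠ 0 := Nat.cast_ne_zero.mpr hp.ne'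
    congr 1
    push_cast
    field_simp
  constructor
  · rintro ⟨ρ, hρ, rfl⟩
    have habsρ : ∀ n : ℕ, ‖ρ ^ n‖ = 1 := fun n => by
      rw [norm_pow, hρ, one_pow]
    refine ⟨?_, ?_, ?_⟩
    · simp [norm_mul, habsρ p, Complex.norm_real, Real.norm_eq_abs, abs_of_pos ha0, abs_of_nonneg (Real.sqrt_nonneg _), ha_def]
    · simp only [norm_mul, habsρ q, Complex.norm_real, Real.norm_eq_abs, abs_of_pos hr0,
        Complex.norm_exp_ofReal_mul_I, one_mul, mul_one]
    · simp only
      rw [mul_pow, mul_pow, mul_pow, hexp_p]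
      ring
  · rintro ⟨h1, h2, h3⟩
    have hz1 : z.1 ≠ 0 := by
      intro h; rw [h] at h1; simp at h1; linarith [ha0, h1.symm]
    have hz2 : z.2 ≠ 0 := by
      intro h; rw [h] at h2; simp at h2; linarith [hr0, h2.symm]
    set c1 : ℂ := z.1 / a with hc1_def
    set c2 : ℂ := z.2 / ((r:ℂ) * Complex.exp (((θ / p : ℝ):ℂ) * I)) with hc2_def
    have haC : (a:ℂ) ≠ 0 := by exact_mod_cast ha0.ne'
    have hrC : (r:ℂ) ≠ 0 := by exact_mod_cast hr0.ne'
    have hexpne : Complex.exp (((θ / p : ℝ):ℂ) * I) ≠ 0 := Complex.exp_ne_zero _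
    have hc1ne : c1 ≠ 0 := div_ne_zero hz1 haC
    have hc2ne : c2 ≠ 0 := div_ne_zero hz2 (mul_ne_zero hrC hexpne)
    have habs1 : ‖c1‖ = 1 := by
      rw [hc1_def, norm_div, h1, Complex.norm_real, Real.norm_eq_abs, abs_of_pos ha0, div_self ha0.ne']
    have habs2 : ‖c2‖ = 1 := by
      rw [hc2_def, norm_div, norm_mul, h2, Complex.norm_real, Real.norm_eq_abs, abs_of_pos hr0,
        Complex.norm_exp_ofReal_mul_I, mul_one, div_self hr0.ne']
    have hkey : c2 ^ p = c1 ^ q := by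
      rw [hc1_def, hc2_def, div_pow, div_pow, mul_pow, hexp_p]
      rw [div_eq_div_iff (mul_ne_zero (pow_ne_zero _ hrC) (Complex.exp_ne_zero _)) (pow_ne_zero _ haC)]
      rw [h3]; ring
    obtain ⟨m, n, hmn⟩ : ∃ m n : ℤ, (p:ℤ) * m + (q:ℤ) * n = 1 := by
      refine ⟨Nat.gcdA p q, Nat.gcdB p q, ?_⟩
      have := Nat.gcd_eq_gcd_ab p q
      rw [hpq] at this
      exact_mod_cast this.symm
    refine ⟨c1 ^ m * c2 ^ n, ?_, ?_⟩
    · rw [norm_mul, norm_zpow, norm_zpow, habs1, habs2, one_zpow, one_zpow, one_mul]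
    · have hρp : (c1 ^ m * c2 ^ n) ^ p = c1 := by
        rw [mul_pow, ← zpow_natCast (c1 ^ m), ← zpow_natCast (c2 ^ n),
          ← zpow_mul, ← zpow_mul]
        have : c2 ^ ((n : ℤ) * p) = c1 ^ ((q:ℤ) * n) := by
          rw [mul_comm (n:ℤ) (p:ℤ), zpow_mul, zpow_mul, zpow_natCast, zpow_natCast, hkey]
        rw [this, ← zpow_add₀ hc1ne]
        rw [show (m : ℤ) * p + (q:ℤ) * n = 1 by linarith [hmn], zpow_one]
      have hρq : (c1 ^ m * c2 ^ n) ^ q = c2 := by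
        rw [mul_pow, ← zpow_natCast (c1 ^ m), ← zpow_natCast (c2 ^ n),
          ← zpow_mul, ← zpow_mul]
        have : c1 ^ ((m : ℤ) * q) = c2 ^ ((p:ℤ) * m) := by
          rw [mul_comm (m:ℤ) (q:ℤ), zpow_mul, zpow_mul, zpow_natCast, zpow_natCast, hkey]
        rw [this, ← zpow_add₀ hc2ne, show (p : ℤ) * m + (n:ℤ) * q = 1 by linarith [hmn],
          zpow_one]
      have e1 : c1 * a = z.1 := by rw [hc1_def, div_mul_cancel₀ _ haC]
      have e2 : c2 * ((r:ℂ) * Complex.exp (((θ / p : ℝ):ℂ) * I)) = z.2 := by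
        rw [hc2_def, div_mul_cancel₀ _ (mul_ne_zero hrC hexpne)]
      rw [hρp, hρq]
      ext <;> simp only []
      · exact (e1.symm)
      · rw [← e2]; ring

lemma pow_inj_nonneg {x y : ℝ} (hx : 0 ≤ x) (hy : 0 ≤ y) {d : ℕ} (hd : d ≠ 0)
    (h : x ^ d = y ^ d) : x = y :=
  (pow_left_strictMonoOn₀ hd).injOn hx hy h


/-- The link of the holomorphic polynomial `z₁^{qd} − z₂^{pd}` on `S³` is the
disjoint union of exactly `d` regular orbits `K(u₀), …, K(u_{d−1})` of the
`S¹`-action `ρ∘(z₁,z₂) = (ρ^p z₁, ρ^q z₂)`, for `d` distinct points `u_j` of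
the punctured unit disk. -/
theorem stmt15 (p q d : ℕ) (hp : 0 < p) (hq : 0 < q) (hpq : Nat.Coprime p q)
    (hd : 0 < d) :
    ∃ u : Fin d → ℂ, Function.Injective u ∧
      (∀ j, 0 < ‖u j‖ ∧ ‖u j‖ < 1) ∧
      {z : ℂ × ℂ | ‖z.1‖ ^ 2 + ‖z.2‖ ^ 2 = 1 ∧
          z.1 ^ (q * d) = z.2 ^ (p * d)} = (⋃ j, KorbitU p q (u j)) ∧
      Pairwise (Function.onFun Disjoint fun j => KorbitU p q (u j)) := by
  haveI : NeZero d := ⟨hd.ne'⟩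
  obtain ⟨r, hr0, hr1, hre⟩ := exists_r p q hp hq
  set a : ℝ := Real.sqrt (1 - r ^ 2) with ha_def
  have h1r2 : (0:ℝ) < 1 - r ^ 2 := by nlinarith
  have ha0 : 0 < a := Real.sqrt_pos.mpr h1r2
  have ha2 : a ^ 2 = 1 - r ^ 2 := Real.sq_sqrt h1r2.le
  have haq : a ^ q = r ^ p := by
    apply pow_inj_nonneg (by positivity) (by positivity) (two_ne_zero)
    rw [← pow_mul, mul_comm q 2, pow_mul, ha2, hre, pow_mul]
    exact pow_right_comm r 2 p
  have haqC : ((a:ℂ)) ^ q = ((r:ℂ)) ^ p := by exact_mod_cast haq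
  set ζ : ℂ := Complex.exp (2 * Real.pi * Complex.I / d) with hζ_def
  have hζ : IsPrimitiveRoot ζ d := Complex.isPrimitiveRoot_exp d hd.ne'
  have hζd : ζ ^ d = 1 := hζ.pow_eq_one
  have habsζ : ‖ζ‖ = 1 := by
    have h : ‖ζ‖ ^ d = 1 := by rw [← norm_pow, hζd, norm_one]
    exact (pow_left_strictMonoOn₀ hd.ne').injOn (norm_nonneg ζ) (Set.mem_setOf.mpr zero_le_one)
      (by rw [h, one_pow])
  have hζne : ∀ j : ℕ, ζ ^ j ≠ 0 := fun j => pow_ne_zero _ (by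
    intro h; rw [h] at habsζ; simp at habsζ)
  have hrCne : ((r:ℂ)) ≠ 0 := by exact_mod_cast hr0.ne'
  have habsu : ∀ j : Fin d, ‖(r:ℂ) * ζ ^ (j:ℕ)‖ = r := by
    intro j
    rw [norm_mul, norm_pow, habsζ, one_pow, mul_one, Complex.norm_real, Real.norm_eq_abs,
      abs_of_pos hr0]
  have hexp_arg : ∀ j : Fin d,
      Complex.exp ((Complex.arg ((r:ℂ) * ζ ^ (j:ℕ)) : ℝ) * Complex.I) = ζ ^ (j:ℕ) := by
    intro j
    have h := Complex.norm_mul_exp_arg_mul_I ((r:ℂ) * ζ ^ (j:ℕ))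
    rw [habsu j] at h
    exact mul_left_cancel₀ hrCne h
  have hmem : ∀ (j : Fin d) (z : ℂ × ℂ), z ∈ KorbitU p q ((r:ℂ) * ζ ^ (j:ℕ)) ↔
      (‖z.1‖ = a ∧ ‖z.2‖ = r ∧
        z.2 ^ p * ((a:ℝ):ℂ) ^ q = z.1 ^ q * (r:ℂ) ^ p * ζ ^ (j:ℕ)) := by
    intro j z
    unfold KorbitU
    rw [habsu j, mem_Korbit_iff p q hp hq hpq r _ hr0 hr1 z, hexp_arg j]
  refine ⟨fun j => (r:ℂ) * ζ ^ (j:ℕ), ?_, ?_, ?_, ?_⟩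
  · intro j k h
    have := mul_left_cancel₀ hrCne h
    exact Fin.ext (hζ.pow_inj j.2 k.2 this)
  · intro j
    rw [habsu j]
    exact ⟨hr0, hr1⟩
  · -- set equality
    ext z
    simp only [Set.mem_setOf_eq, Set.mem_iUnion]
    constructor
    · rintro ⟨hsph, heq⟩
      have hz2 : z.2 ≠ 0 := by
        intro h
        rw [h, zero_pow (by positivity : p * d ≠ 0)] at heq
        rw [pow_eq_zero_iff (by positivity : q * d ≠ 0)] at heq
        rw [heq, h] at hsph
        simp at hsph
      have hz1 : z.1 ≠ 0 := by
        intro h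
        rw [h, zero_pow (by positivity : q * d ≠ 0)] at heq
        rw [eq_comm, pow_eq_zero_iff (by positivity : p * d ≠ 0)] at heq
        rw [heq, h] at hsph
        simp at hsph
      set s : ℝ := ‖z.2‖ with hs_def
      set b : ℝ := ‖z.1‖ with hb_def
      have hs0 : 0 < s := norm_pos_iff.mpr hz2
      have hb0 : 0 < b := norm_pos_iff.mpr hz1
      have habs_eq : b ^ (q * d) = s ^ (p * d) := by
        rw [hs_def, hb_def, ← norm_pow, ← norm_pow, heq]
      have hbq : b ^ q = s ^ p := by
        apply pow_inj_nonneg (by positivity) (by positivity) hd.ne'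
        rw [← pow_mul, ← pow_mul]; exact habs_eq
      have hs1 : s < 1 := by nlinarith
      have hsr : s = r := by
        apply r_unique p q hp hq hs0 hs1 hr0 hr1 _ hre
        have h2 : (b ^ 2) ^ q = (s ^ p) ^ 2 := by
          rw [← hbq, ← pow_mul, ← pow_mul, mul_comm q 2]
        rw [show 1 - s ^ 2 = b ^ 2 by nlinarith, h2, ← pow_mul, mul_comm p 2]
      have hba : b = a := by
        rw [ha_def, show 1 - r ^ 2 = b ^ 2 by nlinarith [hsr ▸ hsph]]
        exact (Real.sqrt_sq hb0.le).symm
      have hw : (z.2 ^ p / z.1 ^ q) ^ d = 1 := by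
        rw [div_pow, ← pow_mul, ← pow_mul, heq, div_self (pow_ne_zero _ hz2)]
      obtain ⟨j, hjd, hj⟩ := hζ.eq_pow_of_pow_eq_one hw
      refine ⟨⟨j, hjd⟩, (hmem ⟨j, hjd⟩ z).mpr ⟨hba ▸ rfl, hsr ▸ rfl, ?_⟩⟩
      simp only
      rw [haqC, hj]
      field_simp
    · rintro ⟨j, hzj⟩
      obtain ⟨hb, hs, hkey⟩ := (hmem j z).mp hzj
      have hζjd : (ζ ^ (j:ℕ)) ^ d = 1 := by
        rw [← pow_mul, mul_comm, pow_mul, hζd, one_pow]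
      constructor
      · rw [hb, hs, ha_def, Real.sq_sqrt h1r2.le]; ring
      · rw [haqC] at hkey
        have h : (z.2 ^ p) ^ d * ((r:ℂ) ^ p) ^ d
            = ((z.1 ^ q) ^ d * ((r:ℂ) ^ p) ^ d) * (ζ ^ (j:ℕ)) ^ d := by
          rw [← mul_pow (z.2 ^ p) ((r:ℂ) ^ p) d, ← mul_pow (z.1 ^ q) ((r:ℂ) ^ p) d,
            ← mul_pow _ (ζ ^ (j:ℕ)) d, hkey]
        rw [hζjd, mul_one] at h
        have h2 := mul_right_cancel₀ (pow_ne_zero d (pow_ne_zero p hrCne)) h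
        rw [pow_mul, pow_mul]
        exact h2.symm
  · -- disjointness
    intro j k hjk
    simp only [Function.onFun]
    rw [Set.disjoint_left]
    intro z hzj hzk
    obtain ⟨hb1, _, hk1⟩ := (hmem j z).mp hzj
    obtain ⟨_, _, hk2⟩ := (hmem k z).mp hzk
    have hz1 : z.1 ≠ 0 := by
      intro h; rw [h] at hb1; simp at hb1; linarith [ha0, hb1.symm]
    have heq : ζ ^ (j:ℕ) = ζ ^ (k:ℕ) :=
      mul_left_cancel₀ (mul_ne_zero (pow_ne_zero q hz1) (pow_ne_zero p hrCne))
        (hk1 ▸ hk2 ▸ rfl)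
    exact hjk (Fin.ext (hζ.pow_inj j.2 k.2 heq))
end
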